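/- (Corollary 9, multi-tier interference-limited limit.) Fix α > 2, an integer T ≥ 1, a tier index t ∈ {1, …, T}, a density λ_t > 0, and for each q ∈ {1, …, T}: P_q > 0, B_q > 0, κ_q > 0, an integer F_q ≥ 1, and χ_q > 0; set SNR_q = χ_q·SNR for a common parameter SNR > 0. Let X_t and g_1, …, g_T be nonnegative random variables with X_t integrable and E[g_q^{2/α}] < ∞ for all q. Set M_{t,0}(z) = E[exp(-z·X_t)], M_{q,I}(z) = E[exp(-z·g_q)], and T_{q,I}(z) = z^{2/α}·E[g_q^{2/α}·γ(1 − 2/α, z·g_q)]. With v_q = (P_q·B_q/(P_t·B_t))^{-1}·(χ_q/χ_t), define Z̄(z) = Σ_{q=1}^T (κ_q·F_t/(F_q·κ_t))·(P_q·B_q/(P_t·B_t))^{2/α}·[(F_q − 1) + M_{q,I}(v_q·z) + T_{q,I}(v_q·z)] > 0, and for each SNR > 0 define the tier-t average rate R̃_t(SNR) = ∫₀^∞ (1 − M_{t,0}(SNR_t·y))·(G̃(y)/y) dy, where SNR_t = χ_t·SNR and G̃(y) = Z̃(y)^{-1} − (α/2)·(y/Z̃(y))·∫₀^∞ ξ^{α/2−1}·exp(-π·(κ_t·λ_t/F_t)·Z̃(y)·ξ)·exp(-y·ξ^{α/2})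 dξ with Z̃(y) = Z̄(SNR_t·y). If ∫₀^∞ (1 − M_{t,0}(z))·Z̄(z)^{-(1 + α/2)} dz < ∞, then lim_{SNR→∞} R̃_t(SNR) = R̃_t^{(SNR∞)} := ∫₀^∞ (1 − M_{t,0}(z))/(z·Z̄(z)) dz, and this limit coincides with the λ → ∞ limit of the rate (it is independent of λ_t and of SNR). -/

import Mathlib

open MeasureTheory Real Set Filter
open scoped ENNReal

/-- The lower incomplete gamma function `γ(a, x) = ∫₀^x s^{a-1} e^{-s} ds`. -/
noncomputable def lowerGamma (a x : ℝ) : ℝ :=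
  ∫ s in Set.Ioc (0 : ℝ) x, s ^ (a - 1) * Real.exp (-s)

/-- Change of variables `z = c y` in a lower Lebesgue integral over `(0, ∞)`. -/
lemma lintegral_Ioi_comp_mul_left (f : ℝ → ℝ≥0∞) {c : ℝ} (hc : 0 < c) :
    ∫⁻ y in Set.Ioi (0 : ℝ), f (c * y) =
      ENNReal.ofReal c⁻¹ * ∫⁻ z in Set.Ioi (0 : ℝ), f z := by
  set e : ℝ ≃ᵐ ℝ := (Homeomorph.mulLeft₀ c hc.ne').toMeasurableEquiv with he
  have hee : ∀ y, e y = c * y := fun y => rfl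
  have hpre : (fun y : ℝ => c * y) ⁻¹' Set.Ioi 0 = Set.Ioi 0 := by
    ext y; simp [Set.mem_Ioi, mul_pos_iff_of_pos_left, hc]
  have hmap : Measure.map e (volume.restrict (Set.Ioi (0:ℝ)))
      = ENNReal.ofReal c⁻¹ • volume.restrict (Set.Ioi (0:ℝ)) := by
    have h1 : Measure.map (fun y : ℝ => c * y) (volume.restrict (Set.Ioi (0:ℝ)))
        = ENNReal.ofReal c⁻¹ • volume.restrict (Set.Ioi (0:ℝ)) := by
      conv_lhs => rw [← hpre]
      rw [← Measure.restrict_map (measurable_const_mul c) measurableSet_Ioi,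
        show (fun y : ℝ => c * y) = (c * ·) from rfl, Real.map_volume_mul_left hc.ne',
        abs_of_pos (inv_pos.mpr hc), Measure.restrict_smul]
    simpa [he] using h1
  calc ∫⁻ y in Set.Ioi (0:ℝ), f (c * y)
      = ∫⁻ y, f (e y) ∂(volume.restrict (Set.Ioi (0:ℝ))) := by simp [hee]
    _ = ∫⁻ z, f z ∂(Measure.map e (volume.restrict (Set.Ioi (0:ℝ)))) :=
        (MeasureTheory.lintegral_map_equiv f e).symm
    _ = ENNReal.ofReal c⁻¹ * ∫⁻ z in Set.Ioi (0:ℝ), f z := by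
        rw [hmap, lintegral_smul_measure, smul_eq_mul]

lemma lowerGamma_integrableOn {a : ℝ} (ha : 0 < a) (x : ℝ) :
    IntegrableOn (fun s : ℝ => s ^ (a - 1) * Real.exp (-s)) (Set.Ioc 0 x) := by
  rcases le_or_gt x 0 with hx | hx
  · rw [Set.Ioc_eq_empty (by exact fun h => absurd (h.trans_le hx) (lt_irrefl 0))]
    exact integrableOn_empty
  · have hbase : IntegrableOn (fun s : ℝ => s ^ (a - 1)) (Set.Ioc 0 x) := by
      have := intervalIntegral.intervalIntegrable_rpow' (a := 0) (b := x)
        (by linarith : (-1 : ℝ) < a - 1)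
      rwa [intervalIntegrable_iff, Set.uIoc_of_le hx.le] at this
    refine Integrable.mono' hbase ?_ ?_
    · exact (by fun_prop :
        Measurable fun s : ℝ => s ^ (a - 1) * Real.exp (-s)).aestronglyMeasurable
    · filter_upwards [ae_restrict_mem measurableSet_Ioc] with s hs
      have hs0 : 0 < s := hs.1
      rw [norm_mul, norm_of_nonneg (Real.rpow_nonneg hs0.le _),
        norm_of_nonneg (Real.exp_nonneg _)]
      exact mul_le_of_le_one_right (Real.rpow_nonneg hs0.le _)
        (Real.exp_le_one_iff.mpr (by linarith))

lemma lowerGamma_mono {a : ℝ} (ha : 0 < a) : Monotone (lowerGamma a) := by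
  intro x y hxy
  rcases le_or_gt x 0 with hx | hx
  · have : lowerGamma a x = 0 := by
      rw [lowerGamma, Set.Ioc_eq_empty (by exact fun h => absurd (h.trans_le hx) (lt_irrefl 0))]
      simp
    rw [this, lowerGamma]
    exact setIntegral_nonneg measurableSet_Ioc fun s hs =>
      mul_nonneg (Real.rpow_nonneg hs.1.le _) (Real.exp_nonneg _)
  · refine setIntegral_mono_set (lowerGamma_integrableOn ha y) ?_ ?_
    · filter_upwards [ae_restrict_mem measurableSet_Ioc] with s hs using
        mul_nonneg (Real.rpow_nonneg hs.1.le _) (Real.exp_nonneg _)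
    · exact Filter.Eventually.of_forall (Set.Ioc_subset_Ioc_right hxy)

lemma lowerGamma_measurable {a : ℝ} (ha : 0 < a) : Measurable (lowerGamma a) :=
  (lowerGamma_mono ha).measurable

/-- The interfering-term integral is bounded by the corresponding Gamma integral. -/
lemma J_le {α : ℝ} (hα : 2 < α) {b y : ℝ} (hb : 0 < b) (hy : 0 < y) :
    (∫ ξ in Set.Ioi (0:ℝ),
        ξ ^ (α/2 - 1) * Real.exp (-(b * ξ)) * Real.exp (-(y * ξ ^ (α/2))))
      ≤ (1/b) ^ (α/2) * Real.Gamma (α/2) := by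
  have hα2 : 0 < α/2 := by linarith
  have hint : IntegrableOn (fun ξ : ℝ => ξ ^ (α/2 - 1) * Real.exp (-(b * ξ)))
      (Set.Ioi 0) := by
    have := integrableOn_rpow_mul_exp_neg_mul_rpow (p := 1) (s := α/2 - 1) (b := b)
      (by linarith) zero_lt_one hb
    simpa [Real.rpow_one, neg_mul] using this
  have hval := Real.integral_rpow_mul_exp_neg_mul_Ioi hα2 hb
  rw [← hval]
  refine integral_mono_of_nonneg ?_ hint ?_
  · filter_upwards [ae_restrict_mem measurableSet_Ioi] with ξ hξ
    exact mul_nonneg (mul_nonneg (Real.rpow_nonneg (le_of_lt hξ) _)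
      (Real.exp_nonneg _)) (Real.exp_nonneg _)
  · filter_upwards [ae_restrict_mem measurableSet_Ioi] with ξ hξ
    exact mul_le_of_le_one_right
      (mul_nonneg (Real.rpow_nonneg (le_of_lt hξ) _) (Real.exp_nonneg _))
      (Real.exp_le_one_iff.mpr
        (neg_nonpos.mpr (mul_nonneg hy.le (Real.rpow_nonneg (le_of_lt hξ) _))))

/-- Real-number pointwise comparison between the finite-SNR integrand and the
interference-limited integrand. -/
lemma pointwise_bounds {α c y Z M J a0 : ℝ} (hα : 2 < α) (hc : 0 < c) (hy : 0 < y)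
    (hZ : 0 < Z) (hM : M ≤ 1) (ha0 : 0 < a0) (hJ0 : 0 ≤ J)
    (hJle : J ≤ (1/(a0*Z)) ^ (α/2) * Real.Gamma (α/2)) {G : ℝ}
    (hG : G = Z⁻¹ - α/2 * (y/Z) * J) :
    (1 - M) * (G / y) ≤ c * ((1 - M)/((c*y)*Z)) ∧
    c * ((1 - M)/((c*y)*Z)) ≤ (1 - M) * (G / y)
      + (α/2 * ((1/a0) ^ (α/2) * Real.Gamma (α/2))) * ((1 - M) * Z ^ (-(1+α/2))) := by
  have hM' : 0 ≤ 1 - M := by linarith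
  have hα2 : 0 < α/2 := by linarith
  have hE1 : c * ((1 - M)/((c*y)*Z)) = (1 - M) * (G / y) + (α/2) * ((1 - M) * J) / Z := by
    rw [hG]; field_simp; ring
  have hΓ : 0 ≤ Real.Gamma (α/2) := (Real.Gamma_pos_of_pos hα2).le
  constructor
  · rw [hE1]
    have h0 : 0 ≤ (α/2) * ((1 - M) * J) / Z :=
      div_nonneg (mul_nonneg hα2.le (mul_nonneg hM' hJ0)) hZ.le
    linarith
  · rw [hE1]
    have hZsplit : Z ^ (-(1+α/2)) = Z⁻¹ * Z ^ (-(α/2)) := by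
      rw [show -(1+α/2) = (-1 : ℝ) + (-(α/2)) by ring, Real.rpow_add hZ,
        Real.rpow_neg_one]
    have hsplit : (1/(a0*Z)) ^ (α/2) = (1/a0) ^ (α/2) * Z ^ (-(α/2)) := by
      rw [one_div, one_div, mul_inv,
        Real.mul_rpow (inv_nonneg.mpr ha0.le) (inv_nonneg.mpr hZ.le),
        Real.inv_rpow hZ.le, ← Real.rpow_neg hZ.le]
    have hterm : (α/2) * ((1 - M) * J) / Z
        ≤ (α/2 * ((1/a0) ^ (α/2) * Real.Gamma (α/2))) * ((1 - M) * Z ^ (-(1+α/2))) := by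
      have hJle' : (1 - M) * J ≤ (1 - M) * ((1/(a0*Z)) ^ (α/2) * Real.Gamma (α/2)) :=
        mul_le_mul_of_nonneg_left hJle hM'
      calc (α/2) * ((1 - M) * J) / Z
          ≤ (α/2) * ((1 - M) * ((1/(a0*Z)) ^ (α/2) * Real.Gamma (α/2))) / Z := by
            apply div_le_div_of_nonneg_right ?_ hZ.le
            · exact mul_le_mul_of_nonneg_left hJle' hα2.le
        _ = (α/2 * ((1/a0) ^ (α/2) * Real.Gamma (α/2))) * ((1 - M) * Z ^ (-(1+α/2))) := by
            rw [hsplit, hZsplit]; field_simp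
    linarith

/-- Corollary 9: in a `T`-tier network with common path-loss exponent `α`, tier-`q` powers
`P q`, biases `B q`, density coefficients `κ q`, frequency bands `F q` with random
frequency reuse and per-tier SNRs `SNR_q = χ_q · SNR`, the tier-`t` average rate
`R̃_t(SNR)` converges, in the interference-limited regime `SNR → ∞`, to
`R̃_t^{(SNR∞)} = ∫₀^∞ (1 - M_{t,0}(z))/(z Z̄(z)) dz`, a quantity independent of the
density `λ_t` and of `SNR`. -/
theorem multi_tier_average_rate_interference_limited_limit
    {Ω : Type*} [MeasurableSpace Ω] (μ : Measure Ω) [IsProbabilityMeasure μ]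
    (α : ℝ) (hα : 2 < α) (T : ℕ) (hT : 1 ≤ T) (t : Fin T) (lamt : ℝ) (hlamt : 0 < lamt)
    (P B κ χ : Fin T → ℝ) (F : Fin T → ℕ)
    (hP : ∀ q, 0 < P q) (hB : ∀ q, 0 < B q) (hκ : ∀ q, 0 < κ q)
    (hF : ∀ q, 1 ≤ F q) (hχ : ∀ q, 0 < χ q)
    (Xt : Ω → ℝ) (g : Fin T → Ω → ℝ)
    (hXt : Measurable Xt) (hg : ∀ q, Measurable (g q))
    (hXtnn : ∀ ω, 0 ≤ Xt ω) (hgnn : ∀ q ω, 0 ≤ g q ω)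
    (hXtint : Integrable Xt μ) (hgint : ∀ q, Integrable (fun ω => g q ω ^ (2 / α)) μ)
    (Mt0 : ℝ → ℝ) (MI TI : Fin T → ℝ → ℝ)
    (hMt0 : ∀ z, Mt0 z = ∫ ω, Real.exp (-(z * Xt ω)) ∂μ)
    (hMI : ∀ q z, MI q z = ∫ ω, Real.exp (-(z * g q ω)) ∂μ)
    (hTI : ∀ q z, TI q z =
        z ^ (2 / α) * ∫ ω, g q ω ^ (2 / α) * lowerGamma (1 - 2 / α) (z * g q ω) ∂μ)
    (Zbar : ℝ → ℝ)
    (hZbar : ∀ z, Zbar z = ∑ q : Fin T,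
        (κ q * (F t : ℝ) / ((F q : ℝ) * κ t)) *
          (P q * B q / (P t * B t)) ^ (2 / α) *
          (((F q : ℝ) - 1) + MI q ((P q * B q / (P t * B t))⁻¹ * (χ q / χ t) * z)
            + TI q ((P q * B q / (P t * B t))⁻¹ * (χ q / χ t) * z)))
    (hZbarpos : ∀ z, 0 < Zbar z)
    (Gt : ℝ → ℝ → ℝ)
    (hGt : ∀ y SNR, Gt y SNR = (Zbar (χ t * SNR * y))⁻¹ -
        (α / 2) * (y / Zbar (χ t * SNR * y)) *
        ∫ ξ in Set.Ioi (0 : ℝ),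
          ξ ^ (α / 2 - 1) *
            Real.exp (-(π * (κ t * lamt / (F t : ℝ)) * Zbar (χ t * SNR * y) * ξ)) *
            Real.exp (-(y * ξ ^ (α / 2))))
    (R : ℝ → ℝ≥0∞)
    (hR : ∀ SNR, R SNR = ∫⁻ y in Set.Ioi (0 : ℝ),
        ENNReal.ofReal ((1 - Mt0 (χ t * SNR * y)) * (Gt y SNR / y)))
    (hfin : (∫⁻ z in Set.Ioi (0 : ℝ),
        ENNReal.ofReal ((1 - Mt0 z) * Zbar z ^ (-(1 + α / 2)))) < ⊤) :
    Tendsto R atTop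
      (nhds (∫⁻ z in Set.Ioi (0 : ℝ), ENNReal.ofReal ((1 - Mt0 z) / (z * Zbar z)))) := by
  -- notation
  set L : ℝ≥0∞ := ∫⁻ z in Set.Ioi (0 : ℝ), ENNReal.ofReal ((1 - Mt0 z) / (z * Zbar z))
    with hLdef
  set C : ℝ≥0∞ := ∫⁻ z in Set.Ioi (0 : ℝ),
    ENNReal.ofReal ((1 - Mt0 z) * Zbar z ^ (-(1 + α / 2))) with hCdef
  have hC : C ≠ ⊤ := hfin.ne
  have hFt : (0 : ℝ) < (F t : ℝ) := by exact_mod_cast Nat.lt_of_lt_of_le Nat.zero_lt_one (hF t)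
  have ha0 : 0 < π * (κ t * lamt / (F t : ℝ)) :=
    mul_pos Real.pi_pos (div_pos (mul_pos (hκ t) hlamt) hFt)
  set K : ℝ := α / 2 * ((1 / (π * (κ t * lamt / (F t : ℝ)))) ^ (α / 2) *
    Real.Gamma (α / 2)) with hKdef
  have hα2 : 0 < α / 2 := by linarith
  have hK : 0 ≤ K :=
    mul_nonneg hα2.le (mul_nonneg (Real.rpow_nonneg (by positivity) _)
      (Real.Gamma_pos_of_pos hα2).le)
  -- the MGF of the useful link is at most 1 for nonnegative arguments
  have hM1 : ∀ z : ℝ, 0 ≤ z → Mt0 z ≤ 1 := by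
    intro z hz
    have hint : Integrable (fun ω => Real.exp (-(z * Xt ω))) μ := by
      refine Integrable.mono' (integrable_const 1)
        ((hXt.const_mul z).neg.exp).aestronglyMeasurable (ae_of_all _ fun ω => ?_)
      rw [norm_of_nonneg (Real.exp_nonneg _)]
      exact Real.exp_le_one_iff.mpr (neg_nonpos.mpr (mul_nonneg hz (hXtnn ω)))
    rw [hMt0]
    calc (∫ ω, Real.exp (-(z * Xt ω)) ∂μ) ≤ ∫ _ω, (1 : ℝ) ∂μ :=
          integral_mono hint (integrable_const 1) fun ω =>
            Real.exp_le_one_iff.mpr (neg_nonpos.mpr (mul_nonneg hz (hXtnn ω)))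
      _ = 1 := by simp
  -- measurability of Mt0 and Zbar
  have hMt0m : Measurable Mt0 := by
    rw [funext hMt0]
    exact (MeasureTheory.StronglyMeasurable.integral_prod_right
      (f := fun (z : ℝ) (ω : Ω) => Real.exp (-(z * Xt ω)))
      ((measurable_fst.mul (hXt.comp measurable_snd)).neg.exp).stronglyMeasurable).measurable
  have hMIm : ∀ q, Measurable (MI q) := by
    intro q
    rw [funext (hMI q)]
    exact (MeasureTheory.StronglyMeasurable.integral_prod_right
      (f := fun (z : ℝ) (ω : Ω) => Real.exp (-(z * g q ω)))
      ((measurable_fst.mul ((hg q).comp measurable_snd)).neg.exp).stronglyMeasurable).measurable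
  have hTIm : ∀ q, Measurable (TI q) := by
    intro q
    have hlg : 0 < 1 - 2 / α := by
      have : 2 / α < 1 := (div_lt_one (by linarith)).mpr (by linarith)
      linarith
    have h1 : Measurable fun w : ℝ => w ^ (2 / α) := by fun_prop
    have h2 : Measurable fun z : ℝ =>
        ∫ ω, g q ω ^ (2 / α) * lowerGamma (1 - 2 / α) (z * g q ω) ∂μ :=
      (MeasureTheory.StronglyMeasurable.integral_prod_right
        (f := fun (z : ℝ) (ω : Ω) => g q ω ^ (2 / α) * lowerGamma (1 - 2 / α) (z * g q ω))
        (Measurable.stronglyMeasurable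
          ((h1.comp ((hg q).comp measurable_snd)).mul
            ((lowerGamma_measurable hlg).comp
              (measurable_fst.mul ((hg q).comp measurable_snd)))))).measurable
    rw [funext (hTI q)]
    exact h1.mul h2
  have hZm : Measurable Zbar := by
    rw [funext hZbar]
    refine Finset.measurable_sum _ fun q _ => ?_
    exact (((measurable_const.add
      ((hMIm q).comp (measurable_const_mul _))).add
      ((hTIm q).comp (measurable_const_mul _))).const_mul _)
  -- key estimates for a fixed positive SNR
  have hkey : ∀ SNR : ℝ, 0 < SNR →
      R SNR ≤ L ∧ L ≤ R SNR + ENNReal.ofReal K * (ENNReal.ofReal (χ t * SNR)⁻¹ * C) := by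
    intro SNR hSNR
    have hc : 0 < χ t * SNR := mul_pos (hχ t) hSNR
    -- pointwise bounds
    have hpt : ∀ y : ℝ, y ∈ Set.Ioi (0:ℝ) →
        (1 - Mt0 (χ t * SNR * y)) * (Gt y SNR / y)
          ≤ (χ t * SNR) * ((1 - Mt0 (χ t * SNR * y)) /
              ((χ t * SNR * y) * Zbar (χ t * SNR * y))) ∧
        (χ t * SNR) * ((1 - Mt0 (χ t * SNR * y)) /
              ((χ t * SNR * y) * Zbar (χ t * SNR * y)))
          ≤ (1 - Mt0 (χ t * SNR * y)) * (Gt y SNR / y)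
            + K * ((1 - Mt0 (χ t * SNR * y)) * Zbar (χ t * SNR * y) ^ (-(1 + α / 2))) := by
      intro y hy
      have hy0 : (0:ℝ) < y := hy
      have hZ := hZbarpos (χ t * SNR * y)
      have hM := hM1 (χ t * SNR * y) (by positivity)
      have hb : 0 < π * (κ t * lamt / (F t : ℝ)) * Zbar (χ t * SNR * y) := mul_pos ha0 hZ
      have hJ0 : 0 ≤ ∫ ξ in Set.Ioi (0 : ℝ),
          ξ ^ (α / 2 - 1) *
            Real.exp (-(π * (κ t * lamt / (F t : ℝ)) * Zbar (χ t * SNR * y) * ξ)) *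
            Real.exp (-(y * ξ ^ (α / 2))) :=
        setIntegral_nonneg measurableSet_Ioi fun ξ hξ =>
          mul_nonneg (mul_nonneg (Real.rpow_nonneg (le_of_lt hξ) _)
            (Real.exp_nonneg _)) (Real.exp_nonneg _)
      have hJle := J_le hα hb hy0
      exact pointwise_bounds hα hc hy0 hZ hM ha0 hJ0 hJle (hGt y SNR)
    -- the substituted main integral equals `L`
    have hmain : (∫⁻ y in Set.Ioi (0:ℝ),
        ENNReal.ofReal (χ t * SNR) * ENNReal.ofReal ((1 - Mt0 (χ t * SNR * y)) /
          ((χ t * SNR * y) * Zbar (χ t * SNR * y)))) = L := by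
      rw [lintegral_const_mul' _ _ ENNReal.ofReal_ne_top]
      have hsub := lintegral_Ioi_comp_mul_left
        (fun z => ENNReal.ofReal ((1 - Mt0 z) / (z * Zbar z))) hc
      calc ENNReal.ofReal (χ t * SNR) * ∫⁻ y in Set.Ioi (0:ℝ),
            ENNReal.ofReal ((1 - Mt0 (χ t * SNR * y)) /
              ((χ t * SNR * y) * Zbar (χ t * SNR * y)))
          = ENNReal.ofReal (χ t * SNR) * (ENNReal.ofReal (χ t * SNR)⁻¹ * L) := by
            rw [show (∫⁻ y in Set.Ioi (0:ℝ),
              ENNReal.ofReal ((1 - Mt0 (χ t * SNR * y)) /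
                ((χ t * SNR * y) * Zbar (χ t * SNR * y))))
              = ENNReal.ofReal (χ t * SNR)⁻¹ * L from hsub]
        _ = L := by
            rw [← mul_assoc, ← ENNReal.ofReal_mul hc.le, mul_inv_cancel₀ hc.ne',
              ENNReal.ofReal_one, one_mul]
    -- the error integral
    have herr : (∫⁻ y in Set.Ioi (0:ℝ), ENNReal.ofReal
          (K * ((1 - Mt0 (χ t * SNR * y)) * Zbar (χ t * SNR * y) ^ (-(1 + α / 2)))))
        = ENNReal.ofReal K * (ENNReal.ofReal (χ t * SNR)⁻¹ * C) := by
      have h1 : ∀ y : ℝ, ENNReal.ofReal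
          (K * ((1 - Mt0 (χ t * SNR * y)) * Zbar (χ t * SNR * y) ^ (-(1 + α / 2))))
          = ENNReal.ofReal K * ENNReal.ofReal
            ((1 - Mt0 (χ t * SNR * y)) * Zbar (χ t * SNR * y) ^ (-(1 + α / 2))) :=
        fun y => ENNReal.ofReal_mul hK
      rw [lintegral_congr fun y => h1 y, lintegral_const_mul' _ _ ENNReal.ofReal_ne_top]
      congr 1
      exact lintegral_Ioi_comp_mul_left
        (fun z => ENNReal.ofReal ((1 - Mt0 z) * Zbar z ^ (-(1 + α / 2)))) hc
    constructor
    · -- upper bound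
      rw [hR SNR]
      calc (∫⁻ y in Set.Ioi (0:ℝ),
            ENNReal.ofReal ((1 - Mt0 (χ t * SNR * y)) * (Gt y SNR / y)))
          ≤ ∫⁻ y in Set.Ioi (0:ℝ),
            ENNReal.ofReal (χ t * SNR) * ENNReal.ofReal ((1 - Mt0 (χ t * SNR * y)) /
              ((χ t * SNR * y) * Zbar (χ t * SNR * y))) := by
            refine lintegral_mono_ae ((ae_restrict_iff' measurableSet_Ioi).2
              (ae_of_all _ fun y hy => ?_))
            rw [← ENNReal.ofReal_mul hc.le]
            exact ENNReal.ofReal_le_ofReal (hpt y hy).1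
        _ = L := hmain
    · -- lower bound
      have hle : L ≤ (∫⁻ y in Set.Ioi (0:ℝ),
          ENNReal.ofReal ((1 - Mt0 (χ t * SNR * y)) * (Gt y SNR / y))
          + ENNReal.ofReal
            (K * ((1 - Mt0 (χ t * SNR * y)) * Zbar (χ t * SNR * y) ^ (-(1 + α / 2))))) := by
        rw [← hmain]
        refine lintegral_mono_ae ((ae_restrict_iff' measurableSet_Ioi).2
          (ae_of_all _ fun y hy => ?_))
        rw [← ENNReal.ofReal_mul hc.le]
        refine le_trans (ENNReal.ofReal_le_ofReal (hpt y hy).2) ENNReal.ofReal_add_le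
      have hemeas : Measurable fun y : ℝ => ENNReal.ofReal
          (K * ((1 - Mt0 (χ t * SNR * y)) * Zbar (χ t * SNR * y) ^ (-(1 + α / 2)))) := by
        have hpm : Measurable fun w : ℝ => w ^ (-(1 + α / 2)) := by fun_prop
        exact ENNReal.measurable_ofReal.comp
          ((((measurable_const.sub hMt0m).comp (measurable_const_mul _)).mul
            (hpm.comp (hZm.comp (measurable_const_mul _)))).const_mul K)
      rw [lintegral_add_right _ hemeas, herr, ← hR SNR] at hle
      exact hle
  -- limit of the error term
  have hεlim : Tendsto (fun SNR : ℝ =>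
      ENNReal.ofReal K * (ENNReal.ofReal (χ t * SNR)⁻¹ * C)) atTop (nhds 0) := by
    have h1 : Tendsto (fun S : ℝ => (χ t * S)⁻¹) atTop (nhds 0) :=
      Filter.Tendsto.inv_tendsto_atTop (Filter.Tendsto.const_mul_atTop (hχ t) tendsto_id)
    have h2 : Tendsto (fun S : ℝ => ENNReal.ofReal (χ t * S)⁻¹) atTop (nhds 0) := by
      simpa using ENNReal.tendsto_ofReal h1
    have h3 : Tendsto (fun S : ℝ => ENNReal.ofReal (χ t * S)⁻¹ * C) atTop (nhds 0) := by
      simpa using ENNReal.Tendsto.mul_const h2 (Or.inr hC)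
    simpa using ENNReal.Tendsto.const_mul h3 (Or.inr ENNReal.ofReal_ne_top)
  have hlolim : Tendsto (fun SNR : ℝ =>
      L - ENNReal.ofReal K * (ENNReal.ofReal (χ t * SNR)⁻¹ * C)) atTop (nhds L) := by
    simpa using ENNReal.Tendsto.sub tendsto_const_nhds hεlim (Or.inr (by simp))
  refine tendsto_of_tendsto_of_tendsto_of_le_of_le' hlolim tendsto_const_nhds ?_ ?_
  · filter_upwards [eventually_gt_atTop (0:ℝ)] with SNR hSNR
    exact tsub_le_iff_right.mpr (hkey SNR hSNR).2
  · filter_upwards [eventually_gt_atTop (0:ℝ)] with SNR hSNR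
    exact (hkey SNR hSNR).1
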